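/- Let X : Ω → ℝⁿ and ε : Ω → ℝⁿ be square-integrable random vectors on a probability space, with X and ε independent and E[ε] = 0. Let Γ_X = E[X Xᵀ], set Y = X + ε with Γ_Y = E[Y Yᵀ] = Γ_X + Γ_ε, and suppose L_Y has full column rank with Γ_Y = L_Y L_Yᵀ. Let M be a best rank-≤r approximation of Γ_X (L_Y†)ᵀ in the Frobenius norm, and set Â = M L_Y†. Then rank(Â) ≤ r and for every A ∈ ℝ^{n×n} with rank(A) ≤ r, E‖Â (X + ε) − X‖₂² ≤ E‖A (X + ε) − X‖₂². -/

import Mathlib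

open Matrix MeasureTheory

/-- Second (cross-)moment matrix `E[X Yᵀ]` of two random vectors. -/
noncomputable def secondMoment {Ω : Type} [MeasurableSpace Ω] (μ : Measure Ω)
    {n m : ℕ} (X : Ω → Fin n → ℝ) (Y : Ω → Fin m → ℝ) : Matrix (Fin n) (Fin m) ℝ :=
  Matrix.of fun i j => ∫ ω, X ω i * Y ω j ∂μ

/-- Frobenius norm of a real matrix. -/
noncomputable def frob {m n : ℕ} (A : Matrix (Fin m) (Fin n) ℝ) : ℝ :=
  Real.sqrt (∑ i, ∑ j, (A i j) ^ 2)

/-- `Ad` is the Moore–Penrose pseudoinverse of `A` (the four Penrose conditions). -/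
def IsMoorePenrose {m n : ℕ} (A : Matrix (Fin m) (Fin n) ℝ)
    (Ad : Matrix (Fin n) (Fin m) ℝ) : Prop :=
  A * Ad * A = A ∧ Ad * A * Ad = Ad ∧ (A * Ad)ᵀ = A * Ad ∧ (Ad * A)ᵀ = Ad * A

set_option linter.unusedSectionVars false
set_option maxHeartbeats 1000000

section Helpers
variable {Ω : Type} [MeasurableSpace Ω] {μ : Measure Ω} [IsProbabilityMeasure μ] {n m k : ℕ}

lemma mem2_apply {f : Ω → Fin n → ℝ} (hf : MemLp f 2 μ) (i : Fin n) :
    MemLp (fun ω => f ω i) 2 μ :=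
  (ContinuousLinearMap.proj (R := ℝ) (φ := fun _ : Fin n => ℝ) i).comp_memLp' hf

lemma int_mul {f g : Ω → ℝ} (hf : MemLp f 2 μ) (hg : MemLp g 2 μ) :
    Integrable (fun ω => f ω * g ω) μ := by
  refine Integrable.mono' (((hf.integrable_sq.add hg.integrable_sq)).const_mul (1/2))
    (hf.aestronglyMeasurable.mul hg.aestronglyMeasurable) (Filter.Eventually.of_forall fun ω => ?_)
  simp only [Pi.add_apply]
  rw [Real.norm_eq_abs, abs_mul]
  nlinarith [sq_nonneg (|f ω| - |g ω|), sq_abs (f ω), sq_abs (g ω), abs_nonneg (f ω), abs_nonneg (g ω)]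

lemma mem2_mulVec {f : Ω → Fin n → ℝ} (A : Matrix (Fin k) (Fin n) ℝ) (hf : MemLp f 2 μ) :
    MemLp (fun ω => A *ᵥ f ω) 2 μ :=
  (LinearMap.toContinuousLinearMap A.mulVecLin).comp_memLp' hf

lemma sM_transpose (f : Ω → Fin n → ℝ) (g : Ω → Fin m → ℝ) :
    (secondMoment μ f g)ᵀ = secondMoment μ g f := by
  ext i j
  simp only [secondMoment, transpose_apply, Matrix.of_apply, mul_comm]

lemma sM_mulVec_left (A : Matrix (Fin k) (Fin n) ℝ) {f : Ω → Fin n → ℝ} {g : Ω → Fin m → ℝ}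
    (hf : MemLp f 2 μ) (hg : MemLp g 2 μ) :
    secondMoment μ (fun ω => A *ᵥ f ω) g = A * secondMoment μ f g := by
  ext i j
  have h1 : ∀ ω, (A *ᵥ f ω) i * g ω j = ∑ a, A i a * (f ω a * g ω j) := by
    intro ω
    simp only [Matrix.mulVec, dotProduct, Finset.sum_mul, mul_assoc]
  simp only [secondMoment, Matrix.of_apply, Matrix.mul_apply]
  rw [show (fun ω => (A *ᵥ f ω) i * g ω j) = fun ω => ∑ a, A i a * (f ω a * g ω j) from funext h1]
  rw [integral_finset_sum _ (fun a _ => (int_mul (mem2_apply hf a) (mem2_apply hg j)).const_mul _)]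
  exact Finset.sum_congr rfl fun a _ => integral_const_mul _ _

lemma sM_mulVec_right (A : Matrix (Fin k) (Fin m) ℝ) {f : Ω → Fin n → ℝ} {g : Ω → Fin m → ℝ}
    (hf : MemLp f 2 μ) (hg : MemLp g 2 μ) :
    secondMoment μ f (fun ω => A *ᵥ g ω) = secondMoment μ f g * Aᵀ := by
  rw [← sM_transpose, sM_mulVec_left A hg hf, Matrix.transpose_mul, sM_transpose]

lemma sM_sub_left {f g : Ω → Fin n → ℝ} {h : Ω → Fin m → ℝ}
    (hf : MemLp f 2 μ) (hg : MemLp g 2 μ) (hh : MemLp h 2 μ) :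
    secondMoment μ (fun ω => f ω - g ω) h = secondMoment μ f h - secondMoment μ g h := by
  ext i j
  simp only [secondMoment, Matrix.of_apply, Matrix.sub_apply, Pi.sub_apply, sub_mul]
  exact integral_sub (int_mul (mem2_apply hf i) (mem2_apply hh j))
    (int_mul (mem2_apply hg i) (mem2_apply hh j))

lemma sM_add_left {f g : Ω → Fin n → ℝ} {h : Ω → Fin m → ℝ}
    (hf : MemLp f 2 μ) (hg : MemLp g 2 μ) (hh : MemLp h 2 μ) :
    secondMoment μ (fun ω => f ω + g ω) h = secondMoment μ f h + secondMoment μ g h := by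
  ext i j
  simp only [secondMoment, Matrix.of_apply, Matrix.add_apply, Pi.add_apply, add_mul]
  exact integral_add (int_mul (mem2_apply hf i) (mem2_apply hh j))
    (int_mul (mem2_apply hg i) (mem2_apply hh j))

lemma sM_sub_right {f : Ω → Fin n → ℝ} {g h : Ω → Fin m → ℝ}
    (hf : MemLp f 2 μ) (hg : MemLp g 2 μ) (hh : MemLp h 2 μ) :
    secondMoment μ f (fun ω => g ω - h ω) = secondMoment μ f g - secondMoment μ f h := by
  rw [← sM_transpose, sM_sub_left hg hh hf, Matrix.transpose_sub, sM_transpose, sM_transpose]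

lemma sM_add_right {f : Ω → Fin n → ℝ} {g h : Ω → Fin m → ℝ}
    (hf : MemLp f 2 μ) (hg : MemLp g 2 μ) (hh : MemLp h 2 μ) :
    secondMoment μ f (fun ω => g ω + h ω) = secondMoment μ f g + secondMoment μ f h := by
  rw [← sM_transpose, sM_add_left hg hh hf, Matrix.transpose_add, sM_transpose, sM_transpose]

lemma integral_sum_sq {W : Ω → Fin n → ℝ} (hW : MemLp W 2 μ) :
    ∫ ω, ∑ i, (W ω i) ^ 2 ∂μ = Matrix.trace (secondMoment μ W W) := by
  rw [integral_finset_sum _ (fun i _ => (mem2_apply hW i).integrable_sq)]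
  simp only [Matrix.trace, Matrix.diag, secondMoment, Matrix.of_apply, sq]

end Helpers

lemma trace_mul_t {n m : ℕ} (B : Matrix (Fin n) (Fin m) ℝ) :
    Matrix.trace (B * Bᵀ) = ∑ i, ∑ j, (B i j) ^ 2 := by
  simp [Matrix.trace, Matrix.diag, Matrix.mul_apply, sq]

lemma trace_key {n p : ℕ} (LY : Matrix (Fin n) (Fin p) ℝ) (LYd : Matrix (Fin p) (Fin n) ℝ)
    (C : Matrix (Fin n) (Fin n) ℝ) (hC : LY * LYd * C = C) (hCt : Cᵀ = C)
    (A : Matrix (Fin n) (Fin n) ℝ) :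
    Matrix.trace (A * (LY * LYᵀ) * Aᵀ) - Matrix.trace (A * C) - Matrix.trace (C * Aᵀ)
      = Matrix.trace ((C * LYdᵀ - A * LY) * (C * LYdᵀ - A * LY)ᵀ)
        - Matrix.trace ((C * LYdᵀ) * (C * LYdᵀ)ᵀ) := by
  have h1 : A * LY * (C * LYdᵀ)ᵀ = A * C := by
    rw [Matrix.transpose_mul, Matrix.transpose_transpose, hCt, Matrix.mul_assoc,
      ← Matrix.mul_assoc LY, hC]
  have h2 : Matrix.trace ((C * LYdᵀ) * (A * LY)ᵀ) = Matrix.trace (A * C) := by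
    rw [← Matrix.trace_transpose ((C * LYdᵀ) * (A * LY)ᵀ), Matrix.transpose_mul,
      Matrix.transpose_transpose, h1]
  have h3 : Matrix.trace (C * Aᵀ) = Matrix.trace (A * C) := by
    rw [← Matrix.trace_transpose (C * Aᵀ), Matrix.transpose_mul, Matrix.transpose_transpose, hCt,
      Matrix.trace_mul_comm]
  have h4 : A * LY * (A * LY)ᵀ = A * (LY * LYᵀ) * Aᵀ := by
    rw [Matrix.transpose_mul]; simp [Matrix.mul_assoc]
  rw [Matrix.transpose_sub]
  simp only [Matrix.sub_mul, Matrix.mul_sub, Matrix.trace_sub]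
  rw [h1, h4, h2, h3]
  ring

lemma pinv_left_one {n p : ℕ} (LY : Matrix (Fin n) (Fin p) ℝ) (LYd : Matrix (Fin p) (Fin n) ℝ)
    (h1 : LY * LYd * LY = LY) (hrank : LY.rank = p) : LYd * LY = 1 := by
  set E := LYd * LY with hE
  have hidem : E * E = E := by
    rw [hE, Matrix.mul_assoc, ← Matrix.mul_assoc LY LYd LY, h1]
  have hLYE : LY * E = LY := by rw [hE, ← Matrix.mul_assoc, h1]
  have hrE : E.rank = p := by
    refine le_antisymm (le_trans E.rank_le_card_width (by simp)) ?_
    calc p = LY.rank := hrank.symm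
    _ = (LY * E).rank := by rw [hLYE]
    _ ≤ E.rank := Matrix.rank_mul_le_right _ _
  have hsurj : Function.Surjective E.mulVecLin := by
    rw [← LinearMap.range_eq_top]
    apply Submodule.eq_top_of_finrank_eq
    rw [← Matrix.rank, hrE]
    simp [Module.finrank_fintype_fun_eq_card]
  have hfix : ∀ v : Fin p → ℝ, E *ᵥ v = v := by
    intro v
    obtain ⟨w, hw⟩ := hsurj v
    rw [← hw]
    simp only [Matrix.mulVecLin_apply] at hw ⊢
    rw [Matrix.mulVec_mulVec, hidem]
  ext i j
  have := congrFun (hfix (Pi.single j 1)) i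
  rw [Matrix.mulVec_single] at this
  simpa [Matrix.one_apply, Pi.single_apply] using this


/-- Rank-constrained data denoising: `Â = (Γ_X (L_Y†)ᵀ)_r L_Y†` minimizes the
denoising Bayes risk `E‖A (X + ε) − X‖₂²` over all `A` with `rank(A) ≤ r`. -/
theorem denoising_end_to_end_optimal {Ω : Type} [MeasurableSpace Ω]
    (μ : Measure Ω) [IsProbabilityMeasure μ] {n p r : ℕ}
    (X : Ω → Fin n → ℝ) (ε : Ω → Fin n → ℝ)
    (hX : MemLp X 2 μ) (hε : MemLp ε 2 μ)
    (hindep : ProbabilityTheory.IndepFun X ε μ)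
    (hmean : (∫ ω, ε ω ∂μ) = 0)
    (LY : Matrix (Fin n) (Fin p) ℝ) (hLYrank : LY.rank = p)
    (hLY : secondMoment μ (fun ω => X ω + ε ω) (fun ω => X ω + ε ω) = LY * LYᵀ)
    (hLYsum : secondMoment μ (fun ω => X ω + ε ω) (fun ω => X ω + ε ω)
        = secondMoment μ X X + secondMoment μ ε ε)
    (LYd : Matrix (Fin p) (Fin n) ℝ) (hLYd : IsMoorePenrose LY LYd)
    (M : Matrix (Fin n) (Fin p) ℝ)
    (hMrank : M.rank ≤ r)
    (hMbest : ∀ N : Matrix (Fin n) (Fin p) ℝ, N.rank ≤ r →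
      frob (secondMoment μ X X * LYdᵀ - M) ≤ frob (secondMoment μ X X * LYdᵀ - N)) :
    (M * LYd).rank ≤ r ∧
      ∀ A : Matrix (Fin n) (Fin n) ℝ, A.rank ≤ r →
        ∫ ω, ∑ i, ((M * LYd) *ᵥ (X ω + ε ω) - X ω) i ^ 2 ∂μ
          ≤ ∫ ω, ∑ i, (A *ᵥ (X ω + ε ω) - X ω) i ^ 2 ∂μ := by
  have hY : MemLp (fun ω => X ω + ε ω) 2 μ := hX.add hε
  set Y : Ω → Fin n → ℝ := fun ω => X ω + ε ω with hYdef
  set C : Matrix (Fin n) (Fin n) ℝ := secondMoment μ X X with hCdef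
  have hCt : Cᵀ = C := sM_transpose X X
  -- E[ε_i] = 0
  have hmean_i : ∀ i, ∫ ω, ε ω i ∂μ = 0 := by
    intro i
    have h := (ContinuousLinearMap.proj (R := ℝ) (φ := fun _ : Fin n => ℝ) i).integral_comp_comm
      (hε.integrable one_le_two)
    simpa [hmean] using h
  -- secondMoment ε X = 0
  have hεX : secondMoment μ ε X = 0 := by
    ext i j
    have hij : ProbabilityTheory.IndepFun (fun ω => ε ω i) (fun ω => X ω j) μ :=
      hindep.symm.comp (measurable_pi_apply i) (measurable_pi_apply j)
    have := hij.integral_fun_mul_eq_mul_integral (mem2_apply hε i).aestronglyMeasurable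
      (mem2_apply hX j).aestronglyMeasurable
    simp only [secondMoment, Matrix.of_apply, Matrix.zero_apply]
    calc ∫ ω, ε ω i * X ω j ∂μ = (∫ ω, ε ω i ∂μ) * ∫ ω, X ω j ∂μ := this
    _ = 0 := by rw [hmean_i i, zero_mul]
  have hYX : secondMoment μ Y X = C := by
    rw [hYdef, sM_add_left hX hε hX, hεX, add_zero]
  have hXY : secondMoment μ X Y = C := by
    rw [← sM_transpose, hYX, hCt]
  -- the projector argument
  set Q : Matrix (Fin n) (Fin n) ℝ := 1 - LY * LYd with hQdef
  have hQt : Qᵀ = Q := by rw [hQdef, Matrix.transpose_sub, Matrix.transpose_one, hLYd.2.2.1]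
  have hQLY : Q * LY = 0 := by
    rw [hQdef, Matrix.sub_mul, Matrix.one_mul, hLYd.1, sub_self]
  have hQGQ : Q * secondMoment μ Y Y * Qᵀ = 0 := by
    rw [hYdef, hLY, ← Matrix.mul_assoc Q LY LYᵀ, hQLY, Matrix.zero_mul, Matrix.zero_mul]
  have hsum : Q * C * Qᵀ + Q * secondMoment μ ε ε * Qᵀ = 0 := by
    have h := hQGQ
    rw [hYdef, hLYsum, Matrix.mul_add, Matrix.add_mul] at h
    exact h
  set ZX : Ω → Fin n → ℝ := fun ω => Q *ᵥ X ω with hZXdef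
  set Zε : Ω → Fin n → ℝ := fun ω => Q *ᵥ ε ω with hZεdef
  have hZX : MemLp ZX 2 μ := mem2_mulVec Q hX
  have hZε : MemLp Zε 2 μ := mem2_mulVec Q hε
  have hsmX : secondMoment μ ZX ZX = Q * C * Qᵀ := by
    rw [hZXdef, sM_mulVec_left Q hX (mem2_mulVec Q hX), sM_mulVec_right Q hX hX,
      ← Matrix.mul_assoc]
  have hsmε : secondMoment μ Zε Zε = Q * secondMoment μ ε ε * Qᵀ := by
    rw [hZεdef, sM_mulVec_left Q hε (mem2_mulVec Q hε), sM_mulVec_right Q hε hε,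
      ← Matrix.mul_assoc]
  have haeZ : ∀ j, (fun ω => ZX ω j) =ᵐ[μ] 0 := by
    intro j
    have hdiag : (Q * C * Qᵀ) j j + (Q * secondMoment μ ε ε * Qᵀ) j j = 0 := by
      have := congrFun (congrFun hsum j) j
      simpa using this
    have ha : (Q * C * Qᵀ) j j = ∫ ω, ZX ω j * ZX ω j ∂μ := by
      rw [← hsmX]; rfl
    have hb : (Q * secondMoment μ ε ε * Qᵀ) j j = ∫ ω, Zε ω j * Zε ω j ∂μ := by
      rw [← hsmε]; rfl
    have ha0 : (0:ℝ) ≤ ∫ ω, ZX ω j * ZX ω j ∂μ :=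
      integral_nonneg fun ω => mul_self_nonneg _
    have hb0 : (0:ℝ) ≤ ∫ ω, Zε ω j * Zε ω j ∂μ :=
      integral_nonneg fun ω => mul_self_nonneg _
    have hz : ∫ ω, ZX ω j * ZX ω j ∂μ = 0 := by
      rw [ha, hb] at hdiag; linarith
    have hae : (fun ω => ZX ω j * ZX ω j) =ᵐ[μ] 0 :=
      (integral_eq_zero_iff_of_nonneg (fun ω => mul_self_nonneg _)
        (int_mul (mem2_apply hZX j) (mem2_apply hZX j))).mp hz
    filter_upwards [hae] with ω hω
    exact mul_self_eq_zero.mp hω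
  have hCQ : C * Qᵀ = 0 := by
    have h : C * Qᵀ = secondMoment μ X ZX := by
      rw [hZXdef, sM_mulVec_right Q hX hX]
    rw [h]
    ext i j
    simp only [secondMoment, Matrix.of_apply, Matrix.zero_apply]
    refine integral_eq_zero_of_ae ?_
    filter_upwards [haeZ j] with ω hω
    simp only [Pi.zero_apply] at hω ⊢
    rw [hω, mul_zero]
  have hPC : LY * LYd * C = C := by
    have h : C * (LY * LYd) = C := by
      have := hCQ
      rw [hQt, hQdef, Matrix.mul_sub, Matrix.mul_one, sub_eq_zero] at this
      exact this.symm
    have h2 := congrArg Matrix.transpose h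
    rw [Matrix.transpose_mul, hLYd.2.2.1, hCt] at h2
    exact h2
  have hunit : LYd * LY = 1 := pinv_left_one LY LYd hLYd.1 hLYrank
  -- risk formula
  have hrisk : ∀ A : Matrix (Fin n) (Fin n) ℝ,
      ∫ ω, ∑ i, (A *ᵥ (X ω + ε ω) - X ω) i ^ 2 ∂μ
        = Matrix.trace ((C * LYdᵀ - A * LY) * (C * LYdᵀ - A * LY)ᵀ)
          - Matrix.trace ((C * LYdᵀ) * (C * LYdᵀ)ᵀ) + Matrix.trace C := by
    intro A
    have hAY : MemLp (fun ω => A *ᵥ Y ω) 2 μ := mem2_mulVec A hY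
    have hW : MemLp (fun ω => A *ᵥ Y ω - X ω) 2 μ := hAY.sub hX
    have hstep : ∫ ω, ∑ i, (A *ᵥ (X ω + ε ω) - X ω) i ^ 2 ∂μ
        = Matrix.trace (secondMoment μ (fun ω => A *ᵥ Y ω - X ω) (fun ω => A *ᵥ Y ω - X ω)) :=
      integral_sum_sq hW
    rw [hstep]
    have hexp : secondMoment μ (fun ω => A *ᵥ Y ω - X ω) (fun ω => A *ᵥ Y ω - X ω)
        = A * (LY * LYᵀ) * Aᵀ - A * C - C * Aᵀ + C := by
      rw [sM_sub_left hAY hX hW, sM_sub_right hAY hAY hX, sM_sub_right hX hAY hX,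
        sM_mulVec_left A hY hAY, sM_mulVec_right A hY hY, sM_mulVec_left A hY hX,
        sM_mulVec_right A hX hY, hYX, hXY, hLY, ← Matrix.mul_assoc]
      abel
    rw [hexp, Matrix.trace_add, Matrix.trace_sub, Matrix.trace_sub]
    have hk := trace_key LY LYd C hPC hCt A
    linarith
  constructor
  · exact le_trans (Matrix.rank_mul_le_left M LYd) hMrank
  · intro A hA
    rw [hrisk (M * LYd), hrisk A, Matrix.mul_assoc M LYd LY, hunit, Matrix.mul_one]
    have hALY : (A * LY).rank ≤ r := le_trans (Matrix.rank_mul_le_left A LY) hA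
    have hfro := hMbest (A * LY) hALY
    unfold frob at hfro
    have h1 : (0:ℝ) ≤ ∑ i, ∑ j, ((C * LYdᵀ - M) i j) ^ 2 :=
      Finset.sum_nonneg fun i _ => Finset.sum_nonneg fun j _ => sq_nonneg _
    have h2 : (0:ℝ) ≤ ∑ i, ∑ j, ((C * LYdᵀ - A * LY) i j) ^ 2 :=
      Finset.sum_nonneg fun i _ => Finset.sum_nonneg fun j _ => sq_nonneg _
    have h3 : ∑ i, ∑ j, ((C * LYdᵀ - M) i j) ^ 2 ≤ ∑ i, ∑ j, ((C * LYdᵀ - A * LY) i j) ^ 2 := by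
      nlinarith [Real.sq_sqrt h1, Real.sq_sqrt h2,
        Real.sqrt_nonneg (∑ i, ∑ j, ((C * LYdᵀ - M) i j) ^ 2),
        Real.sqrt_nonneg (∑ i, ∑ j, ((C * LYdᵀ - A * LY) i j) ^ 2)]
    simp only [trace_mul_t]
    linarith
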